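/- arXiv:1105.0202 — 4 statements merged into one kernel-verified Lean document; each statement's English description precedes it below -/
import Mathlib

section
/- Let l', t be real numbers with l' > 0 and l'_t ≥ l' > 0 satisfying cosh(l'_t/2)/cosh(l'/2) = cosh(t/2). Then log(l'_t/l') ≤ 2·cosh(t/2)·(1 + exp(−l'))/l'. -/
theorem stmt3 (l' t l't : ℝ) (hl' : 0 < l') (hle : l' ≤ l't)
    (h : Real.cosh (l't/2) / Real.cosh (l'/2) = Real.cosh (t/2)) :
    Real.log (l't/l') ≤ 2 * Real.cosh (t/2) * (1 + Real.exp (-l')) / l' := by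
  have hcpos : 0 < Real.cosh (l'/2) := Real.cosh_pos _
  have heq : Real.cosh (l't/2) = Real.cosh (t/2) * Real.cosh (l'/2) := by
    field_simp at h; linarith
  set C := Real.cosh (t/2) * (1 + Real.exp (-l')) with hC
  have hexpC : Real.exp ((l't - l')/2) ≤ C := by
    have h1 : Real.exp (l't/2) ≤ 2 * Real.cosh (l't/2) := by
      rw [Real.cosh_eq]
      have := (Real.exp_pos (-(l't/2))).le
      linarith
    have h2 : 2 * Real.cosh (l'/2) = Real.exp (l'/2) * (1 + Real.exp (-l')) := by
      rw [Real.cosh_eq, mul_add, ← Real.exp_add]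
      ring_nf
    have h3 : Real.exp (l't/2) ≤ Real.exp (l'/2) * C := by
      calc Real.exp (l't/2) ≤ 2 * Real.cosh (l't/2) := h1
        _ = Real.cosh (t/2) * (2 * Real.cosh (l'/2)) := by rw [heq]; ring
        _ = Real.exp (l'/2) * C := by rw [h2, hC]; ring
    have h4 : Real.exp ((l't - l')/2) * Real.exp (l'/2) ≤ Real.exp (l'/2) * C := by
      rw [← Real.exp_add]
      have : (l't - l')/2 + l'/2 = l't/2 := by ring
      rw [this]; exact h3
    have := (Real.exp_pos (l'/2))
    nlinarith
  have hdiff : l't - l' ≤ 2 * C := by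
    have hCpos : 0 < C := lt_of_lt_of_le (Real.exp_pos _) hexpC
    have hlog : (l't - l')/2 ≤ Real.log C := by
      rw [← Real.log_exp ((l't - l')/2)]
      exact Real.log_le_log (Real.exp_pos _) hexpC
    have := Real.log_le_sub_one_of_pos hCpos
    linarith
  have hlog1 : Real.log (l't/l') ≤ l't/l' - 1 :=
    Real.log_le_sub_one_of_pos (div_pos (lt_of_lt_of_le hl' hle) hl')
  have : l't/l' - 1 ≤ 2 * C / l' := by
    rw [div_sub_one hl'.ne', div_le_div_iff₀ hl' hl']
    nlinarith
  calc Real.log (l't/l') ≤ l't/l' - 1 := hlog1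
    _ ≤ 2 * C / l' := this
    _ = 2 * Real.cosh (t/2) * (1 + Real.exp (-l')) / l' := by rw [hC]; ring
end

section
/- With A(l), B(l) as in Okai's twist formula for the one-holed torus (A(l) = cosh²(l/2)(cosh²(t/2)(cosh l + cosh(l₀/2)) − 2sinh²(l/2)), B(l) = cosh²(t/2)(cosh²(l/2) + cosh(l₀/2)) + sinh²(l/2)cosh(l₀/2)), one has A(l) ≥ B(l) > 1 for all real l > 0, t, and l₀ ≥ 0. -/
noncomputable def Aok (t l₀ l : ℝ) : ℝ :=
  Real.cosh (l/2) ^ 2 *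
    (Real.cosh (t/2) ^ 2 * (Real.cosh l + Real.cosh (l₀/2)) - 2 * Real.sinh (l/2) ^ 2)

noncomputable def Bok (t l₀ l : ℝ) : ℝ :=
  Real.cosh (t/2) ^ 2 * (Real.cosh (l/2) ^ 2 + Real.cosh (l₀/2)) +
    Real.sinh (l/2) ^ 2 * Real.cosh (l₀/2)

theorem stmt6 (t l₀ l : ℝ) (hl : 0 < l) (hl₀ : 0 ≤ l₀) :
    Aok t l₀ l ≥ Bok t l₀ l ∧ Bok t l₀ l > 1 := by
  have hc : 1 < Real.cosh (l/2) := by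
    rw [Real.one_lt_cosh]; positivity
  have hC : 1 ≤ Real.cosh (t/2) := Real.one_le_cosh _
  have hK : 1 ≤ Real.cosh (l₀/2) := Real.one_le_cosh _
  have hs : Real.sinh (l/2) ^ 2 = Real.cosh (l/2) ^ 2 - 1 := by
    have := Real.cosh_sq (l/2); linarith
  have hcl : Real.cosh l = 2 * Real.cosh (l/2) ^ 2 - 1 := by
    have := Real.cosh_two_mul (l/2)
    rw [show 2 * (l/2) = l by ring] at this
    linarith
  unfold Aok Bok
  have hK0 : (0:ℝ) ≤ Real.cosh (l₀/2) := by linarith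
  constructor
  · have h1 : (0:ℝ) ≤ Real.cosh (l/2)^2 - 1 := by nlinarith
    have h2 : (0:ℝ) ≤ Real.cosh (t/2)^2 - 1 := by nlinarith
    have h3 : (0:ℝ) ≤ 2*Real.cosh (l/2)^2 + Real.cosh (l₀/2) := by nlinarith
    rw [ge_iff_le, ← sub_nonneg, hs, hcl]
    calc (0:ℝ) ≤ (Real.cosh (l/2)^2 - 1) * (Real.cosh (t/2)^2 - 1) *
        (2*Real.cosh (l/2)^2 + Real.cosh (l₀/2)) := mul_nonneg (mul_nonneg h1 h2) h3
      _ = _ := by ring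
  · nlinarith [sq_nonneg (Real.cosh (t/2))]
end

section
/- For fixed L > 0, there exist constants M > 0 and ε₀ > 0 such that: for all real l₀ ∈ [0, L], t with |t| ≤ L, and l ∈ (0, ε₀], if τ' is a real number satisfying cosh²(τ'/2) = A(l)/B(l) with A, B as in Okai's one-holed torus twist formula, then |τ'| ≤ M·l. -/
lemma okai_sub (t l₀ l : ℝ) :
    Aok t l₀ l - Bok t l₀ l =
      Real.sinh (l/2) ^ 2 * Real.sinh (t/2) ^ 2 *
        (2 + Real.cosh (l₀/2) + 2 * Real.sinh (l/2) ^ 2) := by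
  have h : Real.cosh l = 2 * Real.cosh (l/2) ^ 2 - 1 := by
    conv_lhs => rw [show l = 2 * (l/2) by ring]
    rw [Real.cosh_two_mul, Real.cosh_sq (l/2)]
    ring
  rw [Aok, Bok, h, Real.cosh_sq (l/2), Real.cosh_sq (t/2)]
  ring

lemma sinh_le_mul_cosh {x : ℝ} (hx : 0 ≤ x) : Real.sinh x ≤ x * Real.cosh x := by
  have hd : ∀ y : ℝ, HasDerivAt (fun y : ℝ => y * Real.cosh y - Real.sinh y)
      (1 * Real.cosh y + y * Real.sinh y - Real.cosh y) y := fun y =>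
    ((hasDerivAt_id y).mul (Real.hasDerivAt_cosh y)).sub (Real.hasDerivAt_sinh y)
  have hmono : MonotoneOn (fun y : ℝ => y * Real.cosh y - Real.sinh y) (Set.Ici 0) := by
    apply monotoneOn_of_deriv_nonneg (convex_Ici 0)
    · exact ((continuous_id.mul Real.continuous_cosh).sub Real.continuous_sinh).continuousOn
    · exact fun y _ => (hd y).differentiableAt.differentiableWithinAt
    · intro y hy
      rw [interior_Ici, Set.mem_Ioi] at hy
      rw [(hd y).deriv]
      have : 1 * Real.cosh y + y * Real.sinh y - Real.cosh y = y * Real.sinh y := by ring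
      rw [this]
      exact mul_nonneg hy.le (Real.sinh_nonneg_iff.mpr hy.le)
  have := hmono Set.self_mem_Ici (Set.mem_Ici.mpr hx) hx
  simp only [Real.sinh_zero, Real.cosh_zero, mul_one, zero_mul, sub_zero, zero_sub] at this
  linarith

set_option maxHeartbeats 1000000 in
theorem stmt7 (L : ℝ) (hL : 0 < L) :
    ∃ M > (0:ℝ), ∃ ε₀ > (0:ℝ),
      ∀ l₀ t l τ' : ℝ, l₀ ∈ Set.Icc 0 L → |t| ≤ L → l ∈ Set.Ioc 0 ε₀ →
        Real.cosh (τ'/2) ^ 2 = Aok t l₀ l / Bok t l₀ l →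
        |τ'| ≤ M * l := by
  obtain ⟨K, hK⟩ : ∃ K : ℝ,
      K = Real.sinh (L/2) ^ 2 * (2 + Real.cosh (L/2) + 2 * Real.sinh (1/2) ^ 2) := ⟨_, rfl⟩
  have hsinhL : 0 < Real.sinh (L/2) := Real.sinh_pos_iff.mpr (by linarith)
  have hKpos : 0 < K := by
    rw [hK]
    apply mul_pos (pow_pos hsinhL 2)
    nlinarith [Real.one_le_cosh (L/2), sq_nonneg (Real.sinh (1/2))]
  refine ⟨Real.sqrt K * Real.cosh (1/2), by positivity, 1, one_pos, ?_⟩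
  rintro l₀ t l τ' ⟨hl₀0, hl₀L⟩ ht ⟨hl0, hl1⟩ hτ
  -- B is positive
  have hu : 1 ≤ Real.cosh (t/2) ^ 2 := by nlinarith [Real.one_le_cosh (t/2)]
  have hB : (2:ℝ) ≤ Bok t l₀ l := by
    rw [Bok]
    have h2 : (2:ℝ) ≤ Real.cosh (l/2) ^ 2 + Real.cosh (l₀/2) := by
      nlinarith [Real.one_le_cosh (l/2), Real.one_le_cosh (l₀/2)]
    have h3 : (1:ℝ) * 2 ≤ Real.cosh (t/2) ^ 2 * (Real.cosh (l/2) ^ 2 + Real.cosh (l₀/2)) :=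
      mul_le_mul hu h2 (by norm_num) (by linarith)
    have h4 : 0 ≤ Real.sinh (l/2) ^ 2 * Real.cosh (l₀/2) :=
      mul_nonneg (sq_nonneg _) (by linarith [Real.one_le_cosh (l₀/2)])
    linarith
  have hBpos : 0 < Bok t l₀ l := by linarith
  have hAB : Real.cosh (τ'/2) ^ 2 * Bok t l₀ l = Aok t l₀ l := by
    rw [hτ, div_mul_cancel₀ _ hBpos.ne']
  have hc : Real.cosh (τ'/2) ^ 2 = Real.sinh (τ'/2) ^ 2 + 1 := Real.cosh_sq _
  have hkey : Real.sinh (τ'/2) ^ 2 * Bok t l₀ l =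
      Real.sinh (l/2) ^ 2 * Real.sinh (t/2) ^ 2 *
        (2 + Real.cosh (l₀/2) + 2 * Real.sinh (l/2) ^ 2) := by
    rw [← okai_sub, ← hAB, hc]; ring
  -- bounds
  have hsinht : Real.sinh (t/2) ^ 2 ≤ Real.sinh (L/2) ^ 2 := by
    have h1 : |Real.sinh (t/2)| ≤ Real.sinh (L/2) := by
      rw [Real.abs_sinh]
      have : |t/2| ≤ L/2 := by rw [abs_div]; simp only [abs_two]; linarith [abs_nonneg t]
      exact Real.sinh_le_sinh.mpr this
    nlinarith [abs_nonneg (Real.sinh (t/2)), sq_abs (Real.sinh (t/2))]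
  have hcoshl₀ : Real.cosh (l₀/2) ≤ Real.cosh (L/2) := by
    rw [Real.cosh_le_cosh, abs_of_nonneg (by linarith : (0:ℝ) ≤ l₀/2),
      abs_of_nonneg (by linarith : (0:ℝ) ≤ L/2)]
    linarith
  have hsinhl : Real.sinh (l/2) ^ 2 ≤ Real.sinh (1/2) ^ 2 := by
    have h1 : Real.sinh (l/2) ≤ Real.sinh (1/2) := Real.sinh_le_sinh.mpr (by linarith)
    have h2 : 0 ≤ Real.sinh (l/2) := Real.sinh_nonneg_iff.mpr (by linarith)
    nlinarith
  have hpos : (0:ℝ) ≤ 2 + Real.cosh (l₀/2) + 2 * Real.sinh (l/2) ^ 2 := by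
    nlinarith [Real.one_le_cosh (l₀/2), sq_nonneg (Real.sinh (l/2))]
  have hs2 : 0 ≤ Real.sinh (l/2) ^ 2 := sq_nonneg _
  have ha : Real.sinh (t/2) ^ 2 * (2 + Real.cosh (l₀/2) + 2 * Real.sinh (l/2) ^ 2) ≤
      Real.sinh (L/2) ^ 2 * (2 + Real.cosh (L/2) + 2 * Real.sinh (1/2) ^ 2) :=
    mul_le_mul hsinht (by linarith) hpos (sq_nonneg _)
  have h4 : Real.sinh (l/2) ^ 2 * Real.sinh (t/2) ^ 2 *
      (2 + Real.cosh (l₀/2) + 2 * Real.sinh (l/2) ^ 2) ≤ K * Real.sinh (l/2) ^ 2 := by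
    calc Real.sinh (l/2) ^ 2 * Real.sinh (t/2) ^ 2 *
        (2 + Real.cosh (l₀/2) + 2 * Real.sinh (l/2) ^ 2)
        = Real.sinh (l/2) ^ 2 *
          (Real.sinh (t/2) ^ 2 * (2 + Real.cosh (l₀/2) + 2 * Real.sinh (l/2) ^ 2)) := by ring
      _ ≤ Real.sinh (l/2) ^ 2 *
          (Real.sinh (L/2) ^ 2 * (2 + Real.cosh (L/2) + 2 * Real.sinh (1/2) ^ 2)) :=
        mul_le_mul_of_nonneg_left ha hs2
      _ = K * Real.sinh (l/2) ^ 2 := by rw [hK]; ring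
  have hbound : Real.sinh (τ'/2) ^ 2 ≤ K * Real.sinh (l/2) ^ 2 := by
    have h3 : Real.sinh (τ'/2) ^ 2 * 2 ≤ Real.sinh (τ'/2) ^ 2 * Bok t l₀ l :=
      mul_le_mul_of_nonneg_left hB (sq_nonneg _)
    linarith [hkey, h3, h4, sq_nonneg (Real.sinh (τ'/2))]
  -- (τ'/2)^2 ≤ sinh(τ'/2)^2
  have hself : (τ'/2) ^ 2 ≤ Real.sinh (τ'/2) ^ 2 := by
    have h1 : |τ'/2| ≤ Real.sinh |τ'/2| := Real.self_le_sinh_iff.mpr (abs_nonneg _)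
    have h2 : Real.sinh |τ'/2| ^ 2 = Real.sinh (τ'/2) ^ 2 := by
      rw [← Real.abs_sinh, sq_abs]
    nlinarith [abs_nonneg (τ'/2), sq_abs (τ'/2)]
  -- sinh(l/2) ≤ (l/2) * cosh(1/2)
  have hsl : Real.sinh (l/2) ≤ (l/2) * Real.cosh (1/2) := by
    have h1 := sinh_le_mul_cosh (by linarith : (0:ℝ) ≤ l/2)
    have h2 : Real.cosh (l/2) ≤ Real.cosh (1/2) := by
      rw [Real.cosh_le_cosh, abs_of_nonneg (by linarith : (0:ℝ) ≤ l/2),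
        abs_of_nonneg (by norm_num : (0:ℝ) ≤ (1:ℝ)/2)]
      linarith
    calc Real.sinh (l/2) ≤ (l/2) * Real.cosh (l/2) := h1
      _ ≤ (l/2) * Real.cosh (1/2) := mul_le_mul_of_nonneg_left h2 (by linarith)
  have hslnn : 0 ≤ Real.sinh (l/2) := Real.sinh_nonneg_iff.mpr (by linarith)
  have hKsq : Real.sqrt K ^ 2 = K := Real.sq_sqrt hKpos.le
  have hsl2 : Real.sinh (l/2) ^ 2 ≤ ((l/2) * Real.cosh (1/2)) ^ 2 := by nlinarith
  have hchain : (τ'/2) ^ 2 ≤ K * ((l/2) * Real.cosh (1/2)) ^ 2 :=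
    le_trans (le_trans hself hbound) (mul_le_mul_of_nonneg_left hsl2 hKpos.le)
  have hsq : τ' ^ 2 ≤ (Real.sqrt K * Real.cosh (1/2) * l) ^ 2 := by
    have he : (Real.sqrt K * Real.cosh (1/2) * l) ^ 2 =
        4 * (K * ((l/2) * Real.cosh (1/2)) ^ 2) := by
      rw [mul_pow, mul_pow, hKsq]; ring
    rw [he]
    linarith [hchain]
  calc |τ'| = Real.sqrt (τ' ^ 2) := (Real.sqrt_sq_eq_abs τ').symm
    _ ≤ Real.sqrt ((Real.sqrt K * Real.cosh (1/2) * l) ^ 2) := Real.sqrt_le_sqrt hsq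
    _ = |Real.sqrt K * Real.cosh (1/2) * l| := Real.sqrt_sq_eq_abs _
    _ = Real.sqrt K * Real.cosh (1/2) * l := abs_of_nonneg (by positivity)
end

section
/- Let l' > 0 and l'_t ≥ l' satisfy cosh(l'_t/2) ≤ K·cosh(l'/2) for some K ≥ 1. Then log(l'_t/l') ≤ 2K(1 + exp(−l'))/l'. -/
theorem stmt12 (l' l't K : ℝ) (hl' : 0 < l') (hle : l' ≤ l't) (hK : 1 ≤ K)
    (h : Real.cosh (l't/2) ≤ K * Real.cosh (l'/2)) :
    Real.log (l't/l') ≤ 2 * K * (1 + Real.exp (-l')) / l' := by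
  have hlt : 0 < l't := lt_of_lt_of_le hl' hle
  have h2K : (0:ℝ) < 2 * K := by linarith
  -- exp(l't/2) ≤ 2K exp(l'/2)
  have h1 : Real.exp (l't/2) ≤ 2 * K * Real.exp (l'/2) := by
    have hc1 : Real.exp (l't/2) ≤ 2 * Real.cosh (l't/2) := by
      rw [Real.cosh_eq]
      nlinarith [Real.exp_pos (-(l't/2))]
    have hc2 : Real.cosh (l'/2) ≤ Real.exp (l'/2) := by
      rw [Real.cosh_eq]
      nlinarith [Real.exp_le_exp.2 (show -(l'/2) ≤ l'/2 by linarith)]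
    nlinarith [Real.cosh_pos (l'/2)]
  have h3 : l't - l' ≤ 2 * Real.log (2 * K) := by
    have : Real.exp (l't/2 - l'/2) ≤ 2 * K := by
      rw [Real.exp_sub, div_le_iff₀ (Real.exp_pos _)]
      linarith
    have := (Real.le_log_iff_exp_le h2K).2 this
    linarith
  have hlog2K : Real.log (2 * K) ≤ K := by
    have h1 : Real.log K ≤ K - 1 := Real.log_le_sub_one_of_pos (by linarith)
    have h2 : Real.log 2 < 0.6931471808 := Real.log_two_lt_d9
    have : Real.log (2 * K) = Real.log 2 + Real.log K := by
      rw [Real.log_mul (by norm_num) (by linarith)]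
    linarith
  have hmain : Real.log (l't/l') ≤ (l't - l') / l' := by
    have := Real.log_le_sub_one_of_pos (show 0 < l't/l' by positivity)
    have heq : l't/l' - 1 = (l't - l')/l' := by field_simp
    linarith
  have hK' : 2 * Real.log (2 * K) ≤ 2 * K * (1 + Real.exp (-l')) := by
    nlinarith [Real.exp_pos (-l')]
  calc Real.log (l't/l') ≤ (l't - l') / l' := hmain
    _ ≤ 2 * Real.log (2 * K) / l' := by gcongr
    _ ≤ 2 * K * (1 + Real.exp (-l')) / l' := by gcongr
end
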